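/- For partitioned permutations (𝒱,π), (𝒲,σ) of {1,…,n}, the equation (𝒱,π)·(𝒲,σ) = (𝒱∨𝒲, πσ) (i.e., |(𝒱,π)|+|(𝒲,σ)| = |(𝒱∨𝒲,πσ)|) holds if and only if all four of the following hold: (1) |π|+|σ|+|πσ| = 2|π∨σ|; (2) |𝒱|+|π∨σ| = |π|+|𝒱∨σ|; (3) |𝒲|+|π∨σ| = |σ|+|π∨𝒲|; (4) |𝒱∨σ|+|π∨𝒲| = |𝒱∨𝒲|+|π∨σ|. -/

import Mathlib

open Equiv

def orbitSetoid {α : Type*} (π : Equiv.Perm α) : Setoid α where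
  r := π.SameCycle
  iseqv := ⟨fun x => Equiv.Perm.SameCycle.refl π x, fun h => h.symm, fun h h' => h.trans h'⟩

noncomputable def cycleCount {n : ℕ} (π : Equiv.Perm (Fin n)) : ℕ :=
  Nat.card (Quotient (orbitSetoid π))

noncomputable def pLen {n : ℕ} (V : Setoid (Fin n)) : ℤ :=
  (n : ℤ) - Nat.card (Quotient V)

noncomputable def permLen {n : ℕ} (π : Equiv.Perm (Fin n)) : ℤ :=
  (n : ℤ) - cycleCount π

theorem orbitSetoid_mul_le {α : Type*} (π σ : Equiv.Perm α) :
    orbitSetoid (π * σ) ≤ orbitSetoid π ⊔ orbitSetoid σ := by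
  set S := orbitSetoid π ⊔ orbitSetoid σ with hS
  have hstep : ∀ x, S x ((π * σ) x) := by
    intro x
    have h1 : S x (σ x) := Setoid.le_def.mp le_sup_right ⟨1, by simp⟩
    have h2 : S (σ x) (π (σ x)) := Setoid.le_def.mp le_sup_left ⟨1, by simp⟩
    exact S.iseqv.trans h1 h2
  have hpow : ∀ (k : ℤ) (x : α), S x (((π * σ) ^ k) x) := by
    intro k
    induction k using Int.induction_on with
    | zero => intro x; simpa using S.iseqv.refl x
    | succ k ih =>
        intro x
        have h : ((π * σ) ^ ((k : ℤ) + 1)) x = ((π * σ) ^ (k : ℤ)) ((π * σ) x) := by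
          rw [zpow_add_one]
          simp [Equiv.Perm.mul_apply]
        rw [h]
        exact S.iseqv.trans (hstep x) (ih ((π * σ) x))
    | pred k ih =>
        intro x
        have h : ((π * σ) ^ (-(k : ℤ) - 1)) x = ((π * σ) ^ (-(k : ℤ))) ((π * σ)⁻¹ x) := by
          rw [zpow_sub_one]
          simp [Equiv.Perm.mul_apply]
        rw [h]
        have hinv : S x ((π * σ)⁻¹ x) := by
          have h2 := hstep ((π * σ)⁻¹ x)
          rw [show (π * σ) ((π * σ)⁻¹ x) = x by simp] at h2
          exact S.iseqv.symm h2
        exact S.iseqv.trans hinv (ih ((π * σ)⁻¹ x))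
  rw [Setoid.le_def]
  rintro x y ⟨k, hk⟩
  exact hk ▸ hpow k x

section Aux
variable {α : Type*}

def mergeS (S : Setoid α) (a b : α) : Setoid α where
  r x y := S x y ∨ (S x a ∧ S b y) ∨ (S x b ∧ S a y)
  iseqv := by
    refine ⟨fun x => Or.inl (S.refl' x), ?_, ?_⟩
    · rintro x y (h | ⟨h1, h2⟩ | ⟨h1, h2⟩)
      · exact Or.inl (S.symm' h)
      · exact Or.inr (Or.inr ⟨S.symm' h2, S.symm' h1⟩)
      · exact Or.inr (Or.inl ⟨S.symm' h2, S.symm' h1⟩)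
    · rintro x y z (h | ⟨h1, h2⟩ | ⟨h1, h2⟩) (g | ⟨g1, g2⟩ | ⟨g1, g2⟩)
      · exact Or.inl (S.trans' h g)
      · exact Or.inr (Or.inl ⟨S.trans' h g1, g2⟩)
      · exact Or.inr (Or.inr ⟨S.trans' h g1, g2⟩)
      · exact Or.inr (Or.inl ⟨h1, S.trans' h2 g⟩)
      · exact Or.inl (S.trans' h1 (S.trans' (S.symm' (S.trans' h2 g1)) g2))
      · exact Or.inl (S.trans' h1 g2)
      · exact Or.inr (Or.inr ⟨h1, S.trans' h2 g⟩)
      · exact Or.inl (S.trans' h1 g2)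
      · exact Or.inl (S.trans' h1 (S.trans' (S.symm' (S.trans' h2 g1)) g2))

theorem le_mergeS (S : Setoid α) (a b : α) : S ≤ mergeS S a b :=
  Setoid.le_def.mpr fun h => Or.inl h

theorem mergeS_rel (S : Setoid α) (a b : α) : (mergeS S a b) a b :=
  Or.inr (Or.inl ⟨S.refl' a, S.refl' b⟩)

theorem mergeS_le {S T : Setoid α} {a b : α} (hST : S ≤ T) (hab : T a b) :
    mergeS S a b ≤ T := by
  rw [Setoid.le_def]
  rintro x y (h | ⟨h1, h2⟩ | ⟨h1, h2⟩)
  · exact Setoid.le_def.mp hST h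
  · exact T.trans' (Setoid.le_def.mp hST h1) (T.trans' hab (Setoid.le_def.mp hST h2))
  · exact T.trans' (Setoid.le_def.mp hST h1) (T.trans' (T.symm' hab) (Setoid.le_def.mp hST h2))

theorem mergeS_eq_self {S : Setoid α} {a b : α} (hab : S a b) : mergeS S a b = S :=
  le_antisymm (mergeS_le le_rfl hab) (le_mergeS S a b)

/-- orbit setoid is the finest setoid with x ~ π x -/
theorem orbitSetoid_le {T : Setoid α} {π : Equiv.Perm α} (h : ∀ x, T x (π x)) :
    orbitSetoid π ≤ T := by
  have hpow : ∀ (k : ℤ) (x : α), T x ((π ^ k) x) := by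
    intro k
    induction k using Int.induction_on with
    | zero => intro x; simpa using T.refl' x
    | succ k ih =>
        intro x
        have hh : (π ^ ((k : ℤ) + 1)) x = (π ^ (k : ℤ)) (π x) := by
          rw [zpow_add_one]; simp [Equiv.Perm.mul_apply]
        rw [hh]
        exact T.trans' (h x) (ih (π x))
    | pred k ih =>
        intro x
        have hh : (π ^ (-(k : ℤ) - 1)) x = (π ^ (-(k : ℤ))) (π⁻¹ x) := by
          rw [zpow_sub_one]; simp [Equiv.Perm.mul_apply]
        rw [hh]
        have hinv : T x (π⁻¹ x) := by
          have h2 := h (π⁻¹ x)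
          rw [show π (π⁻¹ x) = x by simp] at h2
          exact T.symm' h2
        exact T.trans' hinv (ih (π⁻¹ x))
  rw [Setoid.le_def]
  rintro x y ⟨k, hk⟩
  exact hk ▸ hpow k x

end Aux

section Count
variable {α : Type*} [Finite α]

/-- number of classes -/
noncomputable def nClasses (S : Setoid α) : ℕ := Nat.card (Quotient S)

def qmap {S T : Setoid α} (h : S ≤ T) : Quotient S → Quotient T :=
  Quot.map id fun x y hxy => Setoid.le_def.mp h hxy

theorem qmap_mk {S T : Setoid α} (h : S ≤ T) (x : α) :
    qmap h (Quotient.mk S x) = Quotient.mk T x := rfl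

theorem qmap_surjective {S T : Setoid α} (h : S ≤ T) : Function.Surjective (qmap h) := by
  intro q
  induction q using Quotient.ind with
  | _ x => exact ⟨Quotient.mk S x, rfl⟩

theorem nClasses_antitone {S T : Setoid α} (h : S ≤ T) : nClasses T ≤ nClasses S :=
  Nat.card_le_card_of_surjective (qmap h) (qmap_surjective h)

theorem nClasses_le_card (S : Setoid α) : nClasses S ≤ Nat.card α :=
  Nat.card_le_card_of_surjective (Quotient.mk S) Quotient.mk_surjective

/-- surjective non-injective gives strict card drop -/
theorem card_succ_le_of_surj {β γ : Type*} [Finite β] (g : β → γ) (hs : Function.Surjective g)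
    {x y : β} (hxy : x ≠ y) (hg : g x = g y) : Nat.card γ + 1 ≤ Nat.card β := by
  classical
  have : Finite γ := Finite.of_surjective g hs
  set s := Function.surjInv hs with hsdef
  have hsi : Function.Injective s := Function.injective_surjInv hs
  have hgs : ∀ c, g (s c) = c := fun c => Function.surjInv_eq hs c
  by_cases hc : s (g x) = x
  · -- avoid y
    have hmiss : ∀ c, s c ≠ y := by
      intro c hcy
      have : c = g y := by rw [← hgs c, hcy]
      rw [this, ← hg, hc] at hcy
      exact hxy hcy
    have hinj : Function.Injective (fun p : γ ⊕ Unit => Sum.elim s (fun _ => y) p) := by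
      rintro (c | u) (d | v) hcd
      · simp only [Sum.elim_inl] at hcd; exact congrArg Sum.inl (hsi hcd)
      · simp only [Sum.elim_inl, Sum.elim_inr] at hcd; exact absurd hcd (hmiss c)
      · simp only [Sum.elim_inl, Sum.elim_inr] at hcd; exact absurd hcd.symm (hmiss d)
      · simp
    calc Nat.card γ + 1 = Nat.card (γ ⊕ Unit) := by simp [Nat.card_sum]
      _ ≤ Nat.card β := Nat.card_le_card_of_injective _ hinj
  · have hmiss : ∀ c, s c ≠ x := by
      intro c hcx
      have : c = g x := by rw [← hgs c, hcx]
      rw [this] at hcx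
      exact hc hcx
    have hinj : Function.Injective (fun p : γ ⊕ Unit => Sum.elim s (fun _ => x) p) := by
      rintro (c | u) (d | v) hcd
      · simp only [Sum.elim_inl] at hcd; exact congrArg Sum.inl (hsi hcd)
      · simp only [Sum.elim_inl, Sum.elim_inr] at hcd; exact absurd hcd (hmiss c)
      · simp only [Sum.elim_inl, Sum.elim_inr] at hcd; exact absurd hcd.symm (hmiss d)
      · simp
    calc Nat.card γ + 1 = Nat.card (γ ⊕ Unit) := by simp [Nat.card_sum]
      _ ≤ Nat.card β := Nat.card_le_card_of_injective _ hinj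

theorem nClasses_mergeS_le (S : Setoid α) (a b : α) :
    nClasses (mergeS S a b) ≤ nClasses S :=
  nClasses_antitone (le_mergeS S a b)

theorem nClasses_le_mergeS (S : Setoid α) (a b : α) :
    nClasses S ≤ nClasses (mergeS S a b) + 1 := by
  classical
  set T := mergeS S a b with hT
  set φ := qmap (le_mergeS S a b) with hφ
  have hinj : Function.Injective
      (fun q : Quotient S => if q = Quotient.mk S b then (Sum.inr () : Quotient T ⊕ Unit)
        else Sum.inl (φ q)) := by
    intro q1 q2 h
    by_cases h1 : q1 = Quotient.mk S b <;> by_cases h2 : q2 = Quotient.mk S b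
    · exact h1.trans h2.symm
    · simp [h1, h2] at h
    · simp [h1, h2] at h
    · simp only [h1, h2, if_false, Sum.inl.injEq] at h
      induction q1 using Quotient.ind with
      | _ u =>
        induction q2 using Quotient.ind with
        | _ v =>
          have := Quotient.exact h
          rcases this with (hr | ⟨hr1, hr2⟩ | ⟨hr1, hr2⟩)
          · exact Quotient.sound hr
          · exact absurd (Quotient.sound (S.symm' hr2) : Quotient.mk S v = _) h2
          · exact absurd (Quotient.sound hr1 : Quotient.mk S u = _) h1
  calc nClasses S ≤ Nat.card (Quotient T ⊕ Unit) := Nat.card_le_card_of_injective _ hinj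
    _ = nClasses T + 1 := by simp [Nat.card_sum, nClasses]

theorem nClasses_mergeS_succ_le {S : Setoid α} {a b : α} (hab : ¬ S a b) :
    nClasses (mergeS S a b) + 1 ≤ nClasses S := by
  refine card_succ_le_of_surj (qmap (le_mergeS S a b)) (qmap_surjective _)
    (x := Quotient.mk S a) (y := Quotient.mk S b) ?_ (Quotient.sound (mergeS_rel S a b))
  intro h
  exact hab (Quotient.exact h)

end Count

section M
variable {α : Type*} [Finite α]

theorem exists_rel_of_lt {A B : Setoid α} (hle : A ≤ B) (hne : A ≠ B) :
    ∃ a b, B a b ∧ ¬ A a b := by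
  by_contra h
  push_neg at h
  apply hne
  apply Setoid.ext
  intro a b
  exact ⟨fun hab => Setoid.le_def.mp hle hab, fun hab => h a b hab⟩

/-- chain submodularity -/
theorem nClasses_chain (A B C : Setoid α) (hAB : A ≤ B) :
    nClasses B + nClasses (A ⊔ C) ≤ nClasses A + nClasses (B ⊔ C) := by
  classical
  have key : ∀ k (A : Setoid α), nClasses A = k → A ≤ B →
      nClasses B + nClasses (A ⊔ C) ≤ nClasses A + nClasses (B ⊔ C) := by
    intro k
    induction k using Nat.strong_induction_on with
    | _ k ih =>
      intro A hk hAB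
      by_cases hEq : A = B
      · subst hEq; exact le_rfl
      · obtain ⟨a, b, hB, hA⟩ := exists_rel_of_lt hAB hEq
        set A' := mergeS A a b with hA'
        have hA'B : A' ≤ B := mergeS_le hAB hB
        have hlt : nClasses A' < nClasses A := nClasses_mergeS_succ_le hA
        have h1 : A' ⊔ C ≤ mergeS (A ⊔ C) a b :=
          sup_le (mergeS_le (le_trans le_sup_left (le_mergeS (A ⊔ C) a b)) (mergeS_rel _ a b))
            (le_trans le_sup_right (le_mergeS _ a b))
        have h2 : nClasses (A ⊔ C) ≤ nClasses (A' ⊔ C) + 1 :=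
          le_trans (nClasses_le_mergeS (A ⊔ C) a b) (by
            exact Nat.add_le_add_right (nClasses_antitone h1) 1)
        have h3 := ih (nClasses A') (hk ▸ hlt) A' rfl hA'B
        have h4 : nClasses A' + 1 ≤ nClasses A := nClasses_mergeS_succ_le hA
        omega
  exact key (nClasses A) A rfl hAB

section PermPart
variable {α : Type*} [Finite α] [DecidableEq α]

theorem swap_rel {T : Setoid α} {a b : α} (hab : T a b) (x : α) :
    T x (Equiv.swap a b x) := by
  by_cases hxa : x = a
  · subst hxa; rw [Equiv.swap_apply_left]; exact hab
  by_cases hxb : x = b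
  · subst hxb; rw [Equiv.swap_apply_right]; exact T.symm' hab
  · rw [Equiv.swap_apply_of_ne_of_ne hxa hxb]

theorem orbit_mul_swap_le {T : Setoid α} {ρ : Equiv.Perm α} {a b : α}
    (hρ : orbitSetoid ρ ≤ T) (hab : T a b) : orbitSetoid (ρ * Equiv.swap a b) ≤ T := by
  apply orbitSetoid_le
  intro x
  simp only [Equiv.Perm.mul_apply]
  refine T.trans' (swap_rel hab x) ?_
  exact Setoid.le_def.mp hρ (⟨1, by simp⟩ : ρ.SameCycle (Equiv.swap a b x) (ρ (Equiv.swap a b x)))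

theorem orbit_swap_mul_le {T : Setoid α} {ρ : Equiv.Perm α} {a b : α}
    (hρ : orbitSetoid ρ ≤ T) (hab : T a b) : orbitSetoid (Equiv.swap a b * ρ) ≤ T := by
  apply orbitSetoid_le
  intro x
  simp only [Equiv.Perm.mul_apply]
  refine T.trans' (Setoid.le_def.mp hρ (⟨1, by simp⟩ : ρ.SameCycle x (ρ x))) ?_
  exact swap_rel hab (ρ x)

theorem sameCycle_or (π' : Equiv.Perm α) {a b : α} (hab : a ≠ b) :
    π'.SameCycle a b ∨ (π' * Equiv.swap a b).SameCycle a b := by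
  classical
  by_cases hsc : π'.SameCycle a b
  · exact Or.inl hsc
  right
  set π := π' * Equiv.swap a b with hπ
  have hπb : π b = π' a := by simp [hπ, Equiv.Perm.mul_apply]
  have hex : ∃ m, 1 ≤ m ∧ ((π' ^ m) a = a ∨ (π' ^ m) a = b) := by
    refine ⟨orderOf π', (isOfFinOrder_of_finite π').orderOf_pos, Or.inl ?_⟩
    rw [pow_orderOf_eq_one]; rfl
  set k := Nat.find hex with hk
  obtain ⟨hk1, hk2⟩ := Nat.find_spec hex
  have hka : (π' ^ k) a = a := by
    rcases hk2 with h | h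
    · exact h
    · exact absurd ⟨(k : ℤ), by rw [zpow_natCast]; exact h⟩ hsc
  have main : ∀ j, 1 ≤ j → j ≤ k → (π ^ j) b = (π' ^ j) a := by
    intro j
    induction j with
    | zero => intro h; omega
    | succ j ih =>
      intro _ hjk
      by_cases hj0 : j = 0
      · subst hj0; simpa [pow_one] using hπb
      · have hj1 : 1 ≤ j := Nat.one_le_iff_ne_zero.mpr hj0
        have hjk' : j ≤ k := Nat.le_of_succ_le hjk
        have hjlt : j < k := Nat.lt_of_succ_le hjk
        have hnot := Nat.find_min hex hjlt
        push_neg at hnot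
        obtain ⟨hna, hnb⟩ := hnot hj1
        have h1 : (π ^ (j + 1)) b = π ((π ^ j) b) := by
          rw [pow_succ']; simp [Equiv.Perm.mul_apply]
        rw [h1, ih hj1 hjk']
        have h2 : π ((π' ^ j) a) = π' (Equiv.swap a b ((π' ^ j) a)) := by
          simp [hπ, Equiv.Perm.mul_apply]
        rw [h2, Equiv.swap_apply_of_ne_of_ne hna hnb, ← Equiv.Perm.mul_apply, ← pow_succ']
  have : (π ^ k) b = a := by rw [main k hk1 le_rfl, hka]
  exact Equiv.Perm.SameCycle.symm ⟨(k : ℤ), by rw [zpow_natCast]; exact this⟩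

theorem cyc_ineq (π σ : Equiv.Perm α) :
    nClasses (orbitSetoid π) + nClasses (orbitSetoid σ) + nClasses (orbitSetoid (π * σ)) ≤
      Nat.card α + 2 * nClasses (orbitSetoid π ⊔ orbitSetoid σ) := by
  classical
  have key : ∀ m (π σ : Equiv.Perm α), Nat.card α - nClasses (orbitSetoid σ) = m →
      nClasses (orbitSetoid π) + nClasses (orbitSetoid σ) + nClasses (orbitSetoid (π * σ)) ≤
        Nat.card α + 2 * nClasses (orbitSetoid π ⊔ orbitSetoid σ) := by
    intro m
    induction m using Nat.strong_induction_on with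
    | _ m ih =>
      intro π σ hm
      by_cases hσ1 : σ = 1
      · subst hσ1
        have h1 : orbitSetoid (1 : Equiv.Perm α) ≤ orbitSetoid π :=
          orbitSetoid_le fun x => orbitSetoid π |>.refl' x
        have h2 : orbitSetoid π ⊔ orbitSetoid (1 : Equiv.Perm α) = orbitSetoid π :=
          sup_eq_left.mpr h1
        have h3 : nClasses (orbitSetoid (1 : Equiv.Perm α)) = Nat.card α := by
          symm
          apply Nat.card_eq_of_bijective (Quotient.mk (orbitSetoid (1 : Equiv.Perm α)))
          constructor
          · intro x y hxy
            exact Equiv.Perm.sameCycle_one.mp (Quotient.exact hxy)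
          · exact Quotient.mk_surjective
        rw [mul_one, h2, h3]
        have := nClasses_le_card (α := α) (orbitSetoid π)
        omega
      · -- pick a moved point
        obtain ⟨a, ha⟩ : ∃ a, σ a ≠ a := by
          by_contra h
          push_neg at h
          exact hσ1 (Equiv.ext h)
        set b := σ a with hb
        have hab : a ≠ b := fun h => ha h.symm
        set τ := Equiv.swap a b with hτ
        set π' := π * τ with hπ'
        set σ' := τ * σ with hσ'
        have hττ : τ * τ = 1 := Equiv.swap_mul_self a b
        have hmul : π' * σ' = π * σ := by
          rw [hπ', hσ', mul_assoc, ← mul_assoc τ τ σ, hττ, one_mul]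
        have hπback : π' * τ = π := by rw [hπ', mul_assoc, hττ, mul_one]
        have hσback : τ * σ' = σ := by rw [hσ', ← mul_assoc, hττ, one_mul]
        have hσab : (orbitSetoid σ) a b := ⟨1, by simp [hb]⟩
        -- σ split: nClasses (O σ) + 1 ≤ nClasses (O σ')
        have hσ'a : σ' a = a := by simp [hσ', Equiv.Perm.mul_apply, hτ, ← hb]
        have hnab' : ¬ (orbitSetoid σ') a b := by
          rintro ⟨i, hi⟩
          rw [Equiv.Perm.zpow_apply_eq_self_of_apply_eq_self hσ'a i] at hi
          exact hab hi
        have hOσ'le : orbitSetoid σ' ≤ orbitSetoid σ :=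
          orbit_swap_mul_le le_rfl hσab
        have hmσ : mergeS (orbitSetoid σ') a b ≤ orbitSetoid σ :=
          mergeS_le hOσ'le hσab
        have hσsplit : nClasses (orbitSetoid σ) + 1 ≤ nClasses (orbitSetoid σ') :=
          le_trans (Nat.add_le_add_right (nClasses_antitone hmσ) 1)
            (nClasses_mergeS_succ_le hnab')
        -- measure decreases
        have hσ'card := nClasses_le_card (α := α) (orbitSetoid σ')
        have hmeas : Nat.card α - nClasses (orbitSetoid σ') < m := by omega
        have IH := ih _ hmeas π' σ' rfl
        rw [hmul] at IH
        -- joins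
        set J := orbitSetoid π ⊔ orbitSetoid σ with hJ
        set J' := orbitSetoid π' ⊔ orbitSetoid σ' with hJ'
        have hJab : J a b := Setoid.le_def.mp le_sup_right hσab
        have hJ'leJ : J' ≤ J :=
          sup_le (orbit_mul_swap_le le_sup_left hJab) (orbit_swap_mul_le le_sup_right hJab)
        have hJleM : J ≤ mergeS J' a b := by
          have h1 : orbitSetoid π ≤ mergeS J' a b := by
            rw [← hπback]
            exact orbit_mul_swap_le (le_trans le_sup_left (le_mergeS J' a b)) (mergeS_rel J' a b)
          have h2 : orbitSetoid σ ≤ mergeS J' a b := by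
            rw [← hσback]
            exact orbit_swap_mul_le (le_trans le_sup_right (le_mergeS J' a b)) (mergeS_rel J' a b)
          exact sup_le h1 h2
        by_cases hQ : J' a b
        · -- join unchanged
          have hJeq : J = J' := le_antisymm (by rw [← mergeS_eq_self hQ]; exact hJleM) hJ'leJ
          -- π bound: nClasses (O π) ≤ nClasses (O π') + 1
          have hOπ'le : orbitSetoid π' ≤ mergeS (orbitSetoid π) a b :=
            orbit_mul_swap_le (le_mergeS _ a b) (mergeS_rel _ a b)
          have hπbound : nClasses (orbitSetoid π) ≤ nClasses (orbitSetoid π') + 1 :=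
            le_trans (nClasses_le_mergeS (orbitSetoid π) a b)
              (Nat.add_le_add_right (nClasses_antitone hOπ'le) 1)
          rw [hJeq]
          omega
        · -- merged case
          have hnπ' : ¬ π'.SameCycle a b := fun h =>
            hQ (Setoid.le_def.mp (le_trans le_sup_left (le_refl J')) h)
          have hπsc : π.SameCycle a b := by
            rcases sameCycle_or π' hab with h | h
            · exact absurd h hnπ'
            · rwa [hπback] at h
          have hOπ'leOπ : orbitSetoid π' ≤ orbitSetoid π := by
            rw [hπ']
            exact orbit_mul_swap_le le_rfl hπsc
          have hmπ : mergeS (orbitSetoid π') a b ≤ orbitSetoid π :=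
            mergeS_le hOπ'leOπ hπsc
          have hπsplit : nClasses (orbitSetoid π) + 1 ≤ nClasses (orbitSetoid π') :=
            le_trans (Nat.add_le_add_right (nClasses_antitone hmπ) 1)
              (nClasses_mergeS_succ_le hnπ')
          have hcc : nClasses J' ≤ nClasses J + 1 :=
            le_trans (nClasses_le_mergeS J' a b)
              (Nat.add_le_add_right (nClasses_antitone hJleM) 1)
          omega
  exact key _ π σ rfl

/-- A partitioned permutation: a pair `(𝒱, π)` with `𝒱` a partition of `{1,…,n}`
(encoded as a setoid on `Fin n`) coarser than the orbit partition of `π`. -/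
structure PartitionedPerm (n : ℕ) where
  part : Setoid (Fin n)
  perm : Equiv.Perm (Fin n)
  hle : orbitSetoid perm ≤ part

/-- The length `|(𝒱,π)| := 2|𝒱| − |π|` of a partitioned permutation. -/
noncomputable def ppLen {n : ℕ} (a : PartitionedPerm n) : ℤ :=
  2 * pLen a.part - permLen a.perm


/-- For partitioned permutations `(𝒱,π), (𝒲,σ)`, the multiplicativity equation
`(𝒱,π)·(𝒲,σ) = (𝒱∨𝒲, πσ)`, i.e. `|(𝒱,π)|+|(𝒲,σ)| = |(𝒱∨𝒲,πσ)|`, holds if and only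
if the following four conditions hold:
(1) `|π|+|σ|+|πσ| = 2|π∨σ|`; (2) `|𝒱|+|π∨σ| = |π|+|𝒱∨σ|`;
(3) `|𝒲|+|π∨σ| = |σ|+|π∨𝒲|`; (4) `|𝒱∨σ|+|π∨𝒲| = |𝒱∨𝒲|+|π∨σ|`. -/
theorem ppLen_add_eq_iff {n : ℕ} (a b : PartitionedPerm n) :
    (ppLen a + ppLen b = 2 * pLen (a.part ⊔ b.part) - permLen (a.perm * b.perm)) ↔
      (permLen a.perm + permLen b.perm + permLen (a.perm * b.perm) =
          2 * pLen (orbitSetoid a.perm ⊔ orbitSetoid b.perm) ∧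
        pLen a.part + pLen (orbitSetoid a.perm ⊔ orbitSetoid b.perm) =
          permLen a.perm + pLen (a.part ⊔ orbitSetoid b.perm) ∧
        pLen b.part + pLen (orbitSetoid a.perm ⊔ orbitSetoid b.perm) =
          permLen b.perm + pLen (orbitSetoid a.perm ⊔ b.part) ∧
        pLen (a.part ⊔ orbitSetoid b.perm) + pLen (orbitSetoid a.perm ⊔ b.part) =
          pLen (a.part ⊔ b.part) + pLen (orbitSetoid a.perm ⊔ orbitSetoid b.perm)) := by
  classical
  have I1 := cyc_ineq a.perm b.perm
  have I2 := nClasses_chain (orbitSetoid a.perm) a.part (orbitSetoid b.perm) a.hle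
  have I3 := nClasses_chain (orbitSetoid b.perm) b.part (orbitSetoid a.perm) b.hle
  have I4 := nClasses_chain (orbitSetoid a.perm ⊔ orbitSetoid b.perm) (a.part ⊔ orbitSetoid b.perm)
    b.part (sup_le_sup_right a.hle _)
  rw [sup_comm (orbitSetoid b.perm) (orbitSetoid a.perm), sup_comm b.part (orbitSetoid a.perm)]
    at I3
  have e1 : (orbitSetoid a.perm ⊔ orbitSetoid b.perm) ⊔ b.part = orbitSetoid a.perm ⊔ b.part := by
    rw [sup_assoc, sup_eq_right.mpr b.hle]
  have e2 : (a.part ⊔ orbitSetoid b.perm) ⊔ b.part = a.part ⊔ b.part := by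
    rw [sup_assoc, sup_eq_right.mpr b.hle]
  rw [e1, e2] at I4
  have hcard : Nat.card (Fin n) = n := Nat.card_eq_fintype_card.trans (Fintype.card_fin n)
  rw [hcard] at I1
  simp only [nClasses] at I1 I2 I3 I4
  simp only [ppLen, pLen, permLen, cycleCount]
  omega
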